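/- Let Γ_1,…,Γ_t be edge-regular graphs, each with parameters (v,k,λ), with pairwise disjoint vertex sets, such that each Γ_i admits a spread of 1-regular cocliques C_{i,1},…,C_{i,k+1}, and let π_1 = id, π_2,…,π_t be permutations of {1,…,k+1}. If t = (λ+2)(k+1)/v (i.e., vt = (λ+2)(k+1)), then the graph F_{(π_2,…,π_t)}(Γ_1,…,Γ_t) is a Neumaier graph with parameters (vt, k+λ+1, λ; 1, λ+2), and it admits a spread of 1-regular cliques. -/

import Mathlib

/-- A finite simple graph is edge-regular with parameters `(v, k, λ)` if it has exactly
`v` vertices, every vertex has exactly `k` neighbours, it has at least one edge, and any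
two adjacent vertices have exactly `λ` common neighbours. -/
def IsEdgeRegular {V : Type*} (G : SimpleGraph V) (v k l : ℕ) : Prop :=
  Nat.card V = v ∧ (∀ x : V, (G.neighborSet x).ncard = k) ∧ (∃ x y : V, G.Adj x y) ∧
    ∀ x y : V, G.Adj x y → (G.commonNeighbors x y).ncard = l

/-- A Neumaier graph with parameters `(v, k, λ; e, s)` is a non-complete edge-regular
graph with parameters `(v, k, λ)` containing an `e`-regular clique of size `s`. -/
def IsNeumaier {V : Type*} (G : SimpleGraph V) (v k l e s : ℕ) : Prop :=
  IsEdgeRegular G v k l ∧ G ≠ ⊤ ∧ 0 < e ∧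
    ∃ S : Set V, G.IsClique S ∧ S.ncard = s ∧
      ∀ x ∉ S, {y ∈ S | G.Adj x y}.ncard = e

/-- Let `Γ₁, …, Γ_t` be edge-regular graphs with parameters `(v, k, λ)` on pairwise
disjoint vertex sets (modelled as a sigma type over a family `V : Fin t → Type*`), each
admitting a spread of `1`-regular cocliques `C_{i,1}, …, C_{i,k+1}` (modelled by a
labelling `c i : V i → Fin (k+1)` of each vertex by its coclique: the cocliques are the
fibres of `c i`), and let `π₁ = id, π₂, …, π_t` be permutations of the `k+1` labels.
If `v * t = (λ+2) * (k+1)`, then the graph `F_{(π₂,…,π_t)}(Γ₁,…,Γ_t)` — whose vertices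
are those of all the `Γ_i` and in which distinct vertices `x ∈ C_{i,k}`, `y ∈ C_{j,l}`
are adjacent iff (`i = j` and `x ∼ y` in `Γ_i`) or `π_i⁻¹ k = π_j⁻¹ l` — is a Neumaier
graph with parameters `(v t, k + λ + 1, λ; 1, λ + 2)` admitting a spread of `1`-regular
cliques. -/
theorem construction_neumaier (t v k l : ℕ) (ht : 0 < t)
    (V : Fin t → Type*) [∀ i, Fintype (V i)] (G : ∀ i, SimpleGraph (V i))
    (hER : ∀ i, IsEdgeRegular (G i) v k l)
    (c : ∀ i, V i → Fin (k + 1))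
    (hcoclique : ∀ i, ∀ x y : V i, c i x = c i y → ¬ (G i).Adj x y)
    (hreg : ∀ i, ∀ x : V i, ∀ j : Fin (k + 1), c i x ≠ j →
      ∃! y : V i, (G i).Adj x y ∧ c i y = j)
    (π : Fin t → Equiv.Perm (Fin (k + 1))) (hπ : π ⟨0, ht⟩ = 1)
    (hvt : v * t = (l + 2) * (k + 1))
    (F : SimpleGraph (Σ i, V i))
    (hF : ∀ (i j : Fin t) (x : V i) (y : V j),
      F.Adj ⟨i, x⟩ ⟨j, y⟩ ↔ ((⟨i, x⟩ : Σ i, V i) ≠ ⟨j, y⟩ ∧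
        ((∃ y' : V i, (G i).Adj x y' ∧ (⟨i, y'⟩ : Σ i, V i) = ⟨j, y⟩) ∨
          (π i)⁻¹ (c i x) = (π j)⁻¹ (c j y)))) :
    IsNeumaier F (v * t) (k + l + 1) l 1 (l + 2) ∧
      ∃ P : Set (Set (Σ i, V i)), Setoid.IsPartition P ∧
        ∀ C ∈ P, F.IsClique C ∧ ∀ x ∉ C, {y ∈ C | F.Adj x y}.ncard = 1 := by
  classical
  -- adjacency helpers
  have adj_same : ∀ (i : Fin t) (x y : V i), (G i).Adj x y → F.Adj ⟨i, x⟩ ⟨i, y⟩ := by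
    intro i x y h
    rw [hF]
    exact ⟨fun he => (G i).ne_of_adj h (sigma_mk_injective he), Or.inl ⟨y, h, rfl⟩⟩
  have adj_label : ∀ (i j : Fin t) (x : V i) (y : V j),
      (⟨i, x⟩ : Σ i, V i) ≠ ⟨j, y⟩ → (π i)⁻¹ (c i x) = (π j)⁻¹ (c j y) →
      F.Adj ⟨i, x⟩ ⟨j, y⟩ := by
    intro i j x y hne hl
    rw [hF]
    exact ⟨hne, Or.inr hl⟩
  have adj_G_case : ∀ (i j : Fin t) (x : V i) (y : V j), F.Adj ⟨i, x⟩ ⟨j, y⟩ →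
      ¬ ((π i)⁻¹ (c i x) = (π j)⁻¹ (c j y)) → i = j := by
    intro i j x y h hl
    rw [hF] at h
    rcases h.2 with ⟨y', _, heq⟩ | hl'
    · exact congrArg Sigma.fst heq
    · exact absurd hl' hl
  have adj_G_adj : ∀ (i : Fin t) (x y : V i), F.Adj ⟨i, x⟩ ⟨i, y⟩ →
      ¬ ((π i)⁻¹ (c i x) = (π i)⁻¹ (c i y)) → (G i).Adj x y := by
    intro i x y h hl
    rw [hF] at h
    rcases h.2 with ⟨y', ha, heq⟩ | hl'
    · exact (sigma_mk_injective heq) ▸ ha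
    · exact absurd hl' hl
  obtain ⟨x₀, y₀, hxy₀⟩ := (hER ⟨0, ht⟩).2.2.1
  have hk : 0 < k := by
    have h1 := (hER ⟨0, ht⟩).2.1 x₀
    have h2 : 0 < ((G ⟨0, ht⟩).neighborSet x₀).ncard :=
      (Set.ncard_pos (Set.toFinite _)).mpr ⟨y₀, hxy₀⟩
    omega
  have hv : 0 < v := by
    have h1 := (hER ⟨0, ht⟩).1
    have h2 : 0 < Nat.card (V ⟨0, ht⟩) := by
      have : Nonempty (V ⟨0, ht⟩) := ⟨x₀⟩
      exact Nat.card_pos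
    omega
  have hVne : ∀ i, Nonempty (V i) := by
    intro i
    have h1 := (hER i).1
    by_contra h
    rw [not_nonempty_iff] at h
    rw [Nat.card_of_isEmpty] at h1
    omega
  -- fiber cardinalities
  have fib_le : ∀ (i : Fin t) (m m' : Fin (k+1)), m ≠ m' →
      {x : V i | c i x = m}.ncard ≤ {x : V i | c i x = m'}.ncard := by
    intro i m m' hmm
    set f : V i → V i := fun x =>
      if h : c i x = m' then x else (hreg i x m' h).choose with hf
    have hfmem : ∀ x, c i x = m → c i (f x) = m' ∧ (G i).Adj x (f x) := by
      intro x hx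
      have h : ¬ c i x = m' := by rw [hx]; exact hmm
      simp only [hf, dif_neg h]
      exact ⟨(hreg i x m' h).choose_spec.1.2, (hreg i x m' h).choose_spec.1.1⟩
    apply Set.ncard_le_ncard_of_injOn f
    · intro x hx
      exact (hfmem x hx).1
    · intro x hx x' hx' hxx
      have h1 := hfmem x hx
      have h2 := hfmem x' hx'
      have hy : c i (f x) ≠ m := by rw [h1.1]; exact hmm.symm
      have hu := hreg i (f x) m hy
      have e1 : x = hu.choose := hu.choose_spec.2 x ⟨(G i).adj_symm h1.2, hx⟩
      have e2 : x' = hu.choose := by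
        refine hu.choose_spec.2 x' ⟨(G i).adj_symm ?_, hx'⟩
        rw [hxx]
        exact h2.2
      rw [e1, e2]
  have fib_eq : ∀ (i : Fin t) (m m' : Fin (k+1)),
      {x : V i | c i x = m}.ncard = {x : V i | c i x = m'}.ncard := by
    intro i m m'
    rcases eq_or_ne m m' with rfl | h
    · rfl
    · exact le_antisymm (fib_le i m m' h) (fib_le i m' m h.symm)
  have fib_v : ∀ (i : Fin t) (m : Fin (k+1)), (k+1) * {x : V i | c i x = m}.ncard = v := by
    intro i m
    have h1 := (hER i).1
    rw [Nat.card_eq_fintype_card, ← Finset.card_univ,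
      Finset.card_eq_sum_card_fiberwise (f := c i) (t := Finset.univ)
        (fun x _ => Finset.mem_univ _)] at h1
    have h0 : ∀ m' : Fin (k+1),
        (Finset.univ.filter (fun x => c i x = m')).card = {x : V i | c i x = m}.ncard := by
      intro m'
      rw [← fib_eq i m' m, Set.ncard_eq_toFinset_card', Set.toFinset_setOf]
    rw [← h1, Finset.sum_congr rfl (fun m' _ => h0 m'), Finset.sum_const, Finset.card_univ,
      Fintype.card_fin, smul_eq_mul]
  set S : Fin (k+1) → Set (Σ i, V i) := fun m => {z | (π z.1)⁻¹ (c z.1 z.2) = m} with hSdef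
  have hmemS : ∀ (m : Fin (k+1)) (i : Fin t) (x : V i),
      (⟨i, x⟩ : Σ i, V i) ∈ S m ↔ c i x = π i m := by
    intro m i x
    constructor
    · intro h
      have : (π i)⁻¹ (c i x) = m := h
      rw [← this]
      simp
    · intro h
      show (π i)⁻¹ (c i x) = m
      rw [h]
      simp
  have hScard : ∀ m, (S m).ncard = l + 2 := by
    intro m
    have hfin : (S m).ncard = ∑ i : Fin t, {x : V i | c i x = π i m}.ncard := by
      rw [Set.ncard_eq_toFinset_card', Set.toFinset_setOf]
      have he : (Finset.univ.filter (fun z : Σ i, V i => (π z.1)⁻¹ (c z.1 z.2) = m)) =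
          Finset.univ.sigma (fun i => Finset.univ.filter (fun x => c i x = π i m)) := by
        ext ⟨i, x⟩
        simp only [Finset.mem_filter, Finset.mem_univ, true_and, Finset.mem_sigma]
        exact hmemS m i x
      rw [he, Finset.card_sigma]
      refine Finset.sum_congr rfl fun i _ => ?_
      rw [Set.ncard_eq_toFinset_card', Set.toFinset_setOf]
    have h2 : (k+1) * (S m).ncard = (k+1) * (l+2) := by
      rw [hfin, Finset.mul_sum]
      calc ∑ i : Fin t, (k+1) * {x : V i | c i x = π i m}.ncard
          = ∑ _i : Fin t, v := Finset.sum_congr rfl fun i _ => fib_v i (π i m)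
        _ = t * v := by rw [Finset.sum_const, Finset.card_univ, Fintype.card_fin, smul_eq_mul]
        _ = (k+1) * (l+2) := by rw [mul_comm t v, hvt, mul_comm]
    exact Nat.eq_of_mul_eq_mul_left (Nat.succ_pos k) h2
  have hSclique : ∀ m, F.IsClique (S m) := by
    intro m
    rintro ⟨i, x⟩ hx ⟨j, y⟩ hy hne
    exact adj_label i j x y hne ((show (π i)⁻¹ (c i x) = m from hx).trans
      (show (π j)⁻¹ (c j y) = m from hy).symm)
  have hSreg : ∀ m, ∀ z ∉ S m, {y ∈ S m | F.Adj z y}.ncard = 1 := by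
    intro m z hz
    obtain ⟨i, a⟩ := z
    have hca : c i a ≠ π i m := fun h => hz ((hmemS m i a).mpr h)
    have hu := hreg i a (π i m) hca
    set w := hu.choose with hw
    have hws := hu.choose_spec.1
    have hset : {y ∈ S m | F.Adj ⟨i, a⟩ y} = {(⟨i, w⟩ : Σ i, V i)} := by
      ext ⟨j, b⟩
      simp only [Set.mem_setOf_eq, Set.mem_singleton_iff]
      constructor
      · rintro ⟨hmem, hadj⟩
        by_cases hl : (π i)⁻¹ (c i a) = (π j)⁻¹ (c j b)
        · exact absurd (show ((⟨i, a⟩ : Σ i, V i) ∈ S m) from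
            hl.trans (show (π j)⁻¹ (c j b) = m from hmem)) hz
        · obtain rfl : i = j := adj_G_case i j a b hadj hl
          have ha : (G i).Adj a b := adj_G_adj i a b hadj hl
          have hcb : c i b = π i m := (hmemS m i b).mp hmem
          have hbw : b = w := hu.choose_spec.2 b ⟨ha, hcb⟩
          rw [hbw]
      · intro heq
        rw [heq]
        exact ⟨(hmemS m i w).mpr hws.2, adj_same i a w hws.1⟩
    rw [hset, Set.ncard_singleton]
  have hcardV : Nat.card (Σ i, V i) = v * t := by
    rw [Nat.card_eq_fintype_card, Fintype.card_sigma]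
    have hvi : ∀ i, Fintype.card (V i) = v := by
      intro i
      have h := (hER i).1
      rwa [Nat.card_eq_fintype_card] at h
    calc ∑ i, Fintype.card (V i) = ∑ _i : Fin t, v := Finset.sum_congr rfl fun i _ => hvi i
      _ = t * v := by rw [Finset.sum_const, Finset.card_univ, Fintype.card_fin, smul_eq_mul]
      _ = v * t := mul_comm t v
  have hdeg : ∀ z : Σ i, V i, (F.neighborSet z).ncard = k + l + 1 := by
    intro z
    obtain ⟨i, a⟩ := z
    have hself : (⟨i, a⟩ : Σ i, V i) ∈ S ((π i)⁻¹ (c i a)) := rfl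
    have hset : F.neighborSet ⟨i, a⟩ =
        (Sigma.mk i '' (G i).neighborSet a) ∪
          (S ((π i)⁻¹ (c i a)) \ {(⟨i, a⟩ : Σ i, V i)}) := by
      ext ⟨j, b⟩
      simp only [SimpleGraph.mem_neighborSet, Set.mem_union, Set.mem_image, Set.mem_diff,
        Set.mem_singleton_iff]
      constructor
      · intro hadj
        by_cases hl : (π i)⁻¹ (c i a) = (π j)⁻¹ (c j b)
        · exact Or.inr ⟨hl.symm, fun h => (F.ne_of_adj hadj) h.symm⟩
        · obtain rfl : i = j := adj_G_case i j a b hadj hl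
          exact Or.inl ⟨b, adj_G_adj i a b hadj hl, rfl⟩
      · rintro (⟨b', hb', heq⟩ | ⟨hmem, hne⟩)
        · rw [← heq]
          exact adj_same i a b' hb'
        · exact adj_label i j a b (fun h => hne h.symm)
            (show (π j)⁻¹ (c j b) = (π i)⁻¹ (c i a) from hmem).symm
    have hdisj : Disjoint (Sigma.mk i '' (G i).neighborSet a)
        (S ((π i)⁻¹ (c i a)) \ {(⟨i, a⟩ : Σ i, V i)}) := by
      rw [Set.disjoint_left]
      rintro y ⟨b, hb, rfl⟩ ⟨hmem, hne⟩
      have hcb : c i b = c i a :=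
        (π i)⁻¹.injective (show (π i)⁻¹ (c i b) = (π i)⁻¹ (c i a) from hmem)
      exact hcoclique i b a hcb ((G i).adj_symm hb)
    rw [hset, Set.ncard_union_eq hdisj (Set.toFinite _) (Set.toFinite _),
      Set.ncard_image_of_injective _ sigma_mk_injective, (hER i).2.1 a,
      Set.ncard_diff_singleton_of_mem hself, hScard]
    omega
  have hcommon : ∀ z w : Σ i, V i, F.Adj z w → (F.commonNeighbors z w).ncard = l := by
    intro z w hadj
    obtain ⟨i, a⟩ := z
    obtain ⟨j, b⟩ := w
    have hzw : (⟨i, a⟩ : Σ i, V i) ≠ ⟨j, b⟩ := F.ne_of_adj hadj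
    by_cases hl : (π i)⁻¹ (c i a) = (π j)⁻¹ (c j b)
    · have hmza : (⟨i, a⟩ : Σ i, V i) ∈ S ((π i)⁻¹ (c i a)) := rfl
      have hmzb : (⟨j, b⟩ : Σ i, V i) ∈ S ((π i)⁻¹ (c i a)) := hl.symm
      have hset : F.commonNeighbors ⟨i, a⟩ ⟨j, b⟩ =
          S ((π i)⁻¹ (c i a)) \ {(⟨i, a⟩ : Σ i, V i), (⟨j, b⟩ : Σ i, V i)} := by
        ext ⟨p, u⟩
        simp only [SimpleGraph.mem_commonNeighbors, SimpleGraph.mem_neighborSet, Set.mem_diff,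
          Set.mem_insert_iff, Set.mem_singleton_iff]
        constructor
        · rintro ⟨h1, h2⟩
          refine ⟨?_, ?_⟩
          · by_cases hl1 : (π i)⁻¹ (c i a) = (π p)⁻¹ (c p u)
            · exact hl1.symm
            · by_cases hl2 : (π j)⁻¹ (c j b) = (π p)⁻¹ (c p u)
              · exact hl2.symm.trans hl.symm
              · obtain rfl : i = p := adj_G_case i p a u h1 hl1
                obtain rfl : i = j := (adj_G_case j i b u h2 hl2).symm
                have hca : c i a = c i b := (π i)⁻¹.injective hl
                have hab : a ≠ b := fun h => hzw (congrArg (Sigma.mk i) h)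
                have ha1 := adj_G_adj i a u h1 hl1
                have ha2 := adj_G_adj i b u h2 hl2
                have hcu : c i u ≠ c i a := fun h => hcoclique i u a h ((G i).adj_symm ha1)
                have hu := hreg i u (c i a) hcu
                have e1 : a = hu.choose := hu.choose_spec.2 a ⟨(G i).adj_symm ha1, rfl⟩
                have e2 : b = hu.choose := hu.choose_spec.2 b ⟨(G i).adj_symm ha2, hca.symm⟩
                exact absurd (e1.trans e2.symm) hab
          · rintro (h | h)
            · exact (F.ne_of_adj h1) h.symm
            · exact (F.ne_of_adj h2) h.symm
        · rintro ⟨hmem, hne⟩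
          push_neg at hne
          exact ⟨adj_label i p a u (fun h => hne.1 h.symm)
              (show (π p)⁻¹ (c p u) = (π i)⁻¹ (c i a) from hmem).symm,
            adj_label j p b u (fun h => hne.2 h.symm)
              (hl.symm.trans (show (π p)⁻¹ (c p u) = (π i)⁻¹ (c i a) from hmem).symm)⟩
      have hsub : {(⟨i, a⟩ : Σ i, V i), (⟨j, b⟩ : Σ i, V i)} ⊆ S ((π i)⁻¹ (c i a)) :=
        Set.insert_subset_iff.mpr ⟨hmza, Set.singleton_subset_iff.mpr hmzb⟩
      rw [hset, Set.ncard_diff hsub, hScard, Set.ncard_pair hzw]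
      omega
    · obtain rfl : i = j := adj_G_case i j a b hadj hl
      have hab : (G i).Adj a b := adj_G_adj i a b hadj hl
      have hcab : c i a ≠ c i b := fun h => hcoclique i a b h hab
      have hset : F.commonNeighbors ⟨i, a⟩ ⟨i, b⟩ =
          Sigma.mk i '' (G i).commonNeighbors a b := by
        ext ⟨p, u⟩
        simp only [SimpleGraph.mem_commonNeighbors, SimpleGraph.mem_neighborSet, Set.mem_image]
        constructor
        · rintro ⟨h1, h2⟩
          by_cases hl1 : (π i)⁻¹ (c i a) = (π p)⁻¹ (c p u)
          · by_cases hl2 : (π i)⁻¹ (c i b) = (π p)⁻¹ (c p u)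
            · exact absurd ((π i)⁻¹.injective (hl1.trans hl2.symm)) hcab
            · obtain rfl : i = p := adj_G_case i p b u h2 hl2
              have ha2 := adj_G_adj i b u h2 hl2
              have hcu : c i u = c i a := ((π i)⁻¹.injective hl1).symm
              have hub := hreg i b (c i a) (fun h => hcab h.symm)
              have e1 : u = hub.choose := hub.choose_spec.2 u ⟨ha2, hcu⟩
              have e2 : a = hub.choose := hub.choose_spec.2 a ⟨(G i).adj_symm hab, rfl⟩
              exact absurd (congrArg (Sigma.mk i) (e2.trans e1.symm)) (F.ne_of_adj h1)
          · obtain rfl : i = p := adj_G_case i p a u h1 hl1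
            have ha1 := adj_G_adj i a u h1 hl1
            by_cases hl2 : (π i)⁻¹ (c i b) = (π i)⁻¹ (c i u)
            · have hcu : c i u = c i b := ((π i)⁻¹.injective hl2).symm
              have hua := hreg i a (c i b) hcab
              have e1 : u = hua.choose := hua.choose_spec.2 u ⟨ha1, hcu⟩
              have e2 : b = hua.choose := hua.choose_spec.2 b ⟨hab, rfl⟩
              exact absurd (congrArg (Sigma.mk i) (e2.trans e1.symm)) (F.ne_of_adj h2)
            · exact ⟨u, ⟨ha1, adj_G_adj i b u h2 hl2⟩, rfl⟩
        · rintro ⟨u, ⟨hu1, hu2⟩, heq⟩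
          rw [← heq]
          exact ⟨adj_same i a u hu1, adj_same i b u hu2⟩
      rw [hset, Set.ncard_image_of_injective _ sigma_mk_injective]
      exact (hER i).2.2.2 a b hab
  have hedge : ∃ z w : Σ i, V i, F.Adj z w :=
    ⟨⟨_, x₀⟩, ⟨_, y₀⟩, adj_same _ _ _ hxy₀⟩
  have hne_top : F ≠ ⊤ := by
    intro htop
    set z : Σ i, V i := ⟨⟨0, ht⟩, x₀⟩ with hz
    have h1 : (insert z (F.neighborSet z)).ncard ≤ k + l + 2 := by
      have h := Set.ncard_insert_le z (F.neighborSet z)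
      rw [hdeg z] at h
      omega
    have h2 : insert z (F.neighborSet z) ≠ Set.univ := by
      intro h
      have h3 := congrArg Set.ncard h
      rw [Set.ncard_univ, hcardV] at h3
      have hgt : k + l + 2 < v * t := by
        rw [hvt]
        nlinarith [hk]
      omega
    obtain ⟨y, hy⟩ := (Set.ne_univ_iff_exists_notMem _).mp h2
    simp only [Set.mem_insert_iff, SimpleGraph.mem_neighborSet, not_or] at hy
    have hadj : F.Adj z y := by
      rw [htop]
      simp only [SimpleGraph.top_adj]
      exact fun h => hy.1 h.symm
    exact hy.2 hadj
  refine ⟨⟨⟨hcardV, hdeg, hedge, hcommon⟩, hne_top, one_pos,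
    S 0, hSclique 0, hScard 0, hSreg 0⟩, Set.range S, ⟨?_, ?_⟩, ?_⟩
  · rintro ⟨m, hm⟩
    have h := hScard m
    rw [hm, Set.ncard_empty] at h
    omega
  · intro z
    refine ⟨S ((π z.1)⁻¹ (c z.1 z.2)), ⟨⟨_, rfl⟩, rfl⟩, ?_⟩
    rintro b ⟨⟨m, rfl⟩, hzb⟩
    have hm : (π z.1)⁻¹ (c z.1 z.2) = m := hzb
    rw [hm]
  · rintro C ⟨m, rfl⟩
    exact ⟨hSclique m, hSreg m⟩
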